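/- Let A ∈ {0,1}^{m×n}, let e ∈ ℝ^m be the all-ones vector, let S = {x ∈ {0,1}^n : Ax ≥ e}, and let φ := ⋀_{i=1}^m ⋁_{j : A_{ij}=1} x_j be the canonical monotone CNF formula for S (assume each row of A is nonzero). Then for every k ∈ ℤ≥1: every monotone inequality in standard form of pitch at most k that is valid for S is valid for φ^k([0,1]^n), and if φ^k([0,1]^n) ≠ ∅ then xc(φ^k([0,1]^n)) ≤ 2n · (mn)^k. -/

import Mathlib

/-- Reduced Boolean formulas: literals combined with `∧` and `∨`. -/
inductive Fml (n : ℕ) : Type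
  | pos : Fin n → Fml n
  | neg : Fin n → Fml n
  | and : Fml n → Fml n → Fml n
  | or  : Fml n → Fml n → Fml n

namespace Fml

/-- The size of a formula: the number of occurrences of literals. -/
def size {n : ℕ} : Fml n → ℕ
  | pos _ => 1
  | neg _ => 1
  | and φ ψ => φ.size + ψ.size
  | or φ ψ => φ.size + ψ.size

/-- The set `φ(Q)` obtained by feeding the convex set `Q` into the formula `φ`. -/
def app {n : ℕ} : Fml n → Set (Fin n → ℝ) → Set (Fin n → ℝ)
  | pos i, Q => {x ∈ Q | x i = 1}
  | neg i, Q => {x ∈ Q | x i = 0}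
  | and φ ψ, Q => φ.app Q ∩ ψ.app Q
  | or φ ψ, Q => convexHull ℝ (φ.app Q ∪ ψ.app Q)

/-- Iterated application: `φ^0(Q) = Q` and `φ^{ℓ+1}(Q) = φ(φ^ℓ(Q))`. -/
def iterApp {n : ℕ} (φ : Fml n) : ℕ → Set (Fin n → ℝ) → Set (Fin n → ℝ)
  | 0, Q => Q
  | k + 1, Q => φ.app (φ.iterApp k Q)

end Fml

/-- The disjunction `x_{j₁} ∨ ⋯ ∨ x_{j_r}` of the variables listed in a list
(the default `d` is only used for the empty list). -/
def bigOr {n : ℕ} (d : Fml n) : List (Fin n) → Fml n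
  | [] => d
  | [j] => Fml.pos j
  | j :: j' :: l => Fml.or (Fml.pos j) (bigOr d (j' :: l))

/-- The conjunction of a list of formulas (the default `d` is only used for the
empty list). -/
def bigAnd {n : ℕ} (d : Fml n) : List (Fml n) → Fml n
  | [] => d
  | [ψ] => ψ
  | ψ :: ψ' :: l => Fml.and ψ (bigAnd d (ψ' :: l))

open Classical in
/-- The canonical monotone CNF formula `⋀_{i=1}^m ⋁_{j : A i j = 1} x_j`
associated with a 0/1 matrix `A`. -/
noncomputable def canonCNF {m n : ℕ} (hn : 0 < n) (A : Matrix (Fin m) (Fin n) ℝ) :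
    Fml n :=
  bigAnd (Fml.pos ⟨0, hn⟩)
    (((Finset.univ : Finset (Fin m)).sort (· ≤ ·)).map fun i =>
      bigOr (Fml.pos ⟨0, hn⟩)
        ((Finset.univ.filter fun j => A i j = 1).sort (· ≤ ·)))

/-- The 0/1 points of the cube. -/
def CubeVerts (n : ℕ) : Set (Fin n → ℝ) := {x | ∀ i, x i = 0 ∨ x i = 1}

/-- The inequality `∑ c i * x i ≥ δ` has pitch at most `p`. -/
def PitchLE {n : ℕ} (c : Fin n → ℝ) (δ : ℝ) (p : ℕ) : Prop :=
  ∀ J : Finset (Fin n), (∀ j ∈ J, c j ≠ 0) → p ≤ J.card → δ ≤ ∑ j ∈ J, c j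

/-- `P` admits an extended formulation of size `m`. -/
def IsEF {n : ℕ} (P : Set (Fin n → ℝ)) (m : ℕ) : Prop :=
  ∃ (d : ℕ) (T : Matrix (Fin n) (Fin d) ℝ) (A : Matrix (Fin m) (Fin d) ℝ)
    (t : Fin n → ℝ) (b : Fin m → ℝ),
    P = {x | ∃ y : Fin d → ℝ, (∀ i, b i ≤ A.mulVec y i) ∧ x = T.mulVec y + t}

/-- Extension complexity: the smallest size of an extended formulation of `P`. -/
noncomputable def xc {n : ℕ} (P : Set (Fin n → ℝ)) : ℕ := sInf {m | IsEF P m}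

open Set

namespace Stmt13Aux

variable {n : ℕ}

lemma app_subset (ψ : Fml n) {Q : Set (Fin n → ℝ)} (hQ : Convex ℝ Q) :
    ψ.app Q ⊆ Q := by
  induction ψ with
  | pos i => exact fun x hx => hx.1
  | neg i => exact fun x hx => hx.1
  | and φ ψ ih1 ih2 => exact fun x hx => ih1 hx.1
  | or φ ψ ih1 ih2 => exact convexHull_min (Set.union_subset ih1 ih2) hQ

lemma app_convex (ψ : Fml n) {Q : Set (Fin n → ℝ)} (hQ : Convex ℝ Q) :
    Convex ℝ (ψ.app Q) := by
  induction ψ with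
  | pos i =>
      have h : (Fml.pos i).app Q = Q ∩ {x : Fin n → ℝ | x i = 1} := rfl
      rw [h]
      exact hQ.inter (convex_hyperplane ⟨fun x y => rfl, fun c x => rfl⟩ 1)
  | neg i =>
      have h : (Fml.neg i).app Q = Q ∩ {x : Fin n → ℝ | x i = 0} := rfl
      rw [h]
      exact hQ.inter (convex_hyperplane ⟨fun x y => rfl, fun c x => rfl⟩ 0)
  | and φ ψ ih1 ih2 => exact ih1.inter ih2
  | or φ ψ ih1 ih2 => exact convex_convexHull ℝ _

lemma iterApp_convex (ψ : Fml n) : ∀ k, Convex ℝ (ψ.iterApp k (Set.Icc (0 : Fin n → ℝ) 1))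
  | 0 => convex_Icc _ _
  | (k+1) => app_convex ψ (iterApp_convex ψ k)

lemma iterApp_subset_Icc (ψ : Fml n) : ∀ k, ψ.iterApp k (Set.Icc 0 1) ⊆ Set.Icc (0 : Fin n → ℝ) 1
  | 0 => le_refl _
  | (k+1) => (app_subset ψ (iterApp_convex ψ k)).trans (iterApp_subset_Icc ψ k)

end Stmt13Aux
namespace Stmt13Aux

lemma bigAnd_app_subset {n : ℕ} (d : Fml n) (Q : Set (Fin n → ℝ)) :
    ∀ (L : List (Fml n)) (ψ : Fml n), ψ ∈ L → (bigAnd d L).app Q ⊆ ψ.app Q := by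
  intro L
  induction L with
  | nil => intro ψ h; cases h
  | cons a L ih =>
    intro ψ h
    cases L with
    | nil =>
        rcases List.mem_singleton.1 h with rfl
        exact le_refl _
    | cons b L' =>
        rcases List.mem_cons.1 h with rfl | h
        · exact fun x hx => hx.1
        · exact fun x hx => ih ψ h hx.2

lemma bigOr_app_subset {n : ℕ} (d : Fml n) (Q : Set (Fin n → ℝ)) :
    ∀ (l : List (Fin n)), l ≠ [] →
      (bigOr d l).app Q ⊆ convexHull ℝ {y | ∃ j ∈ l, y ∈ Q ∧ y j = 1} := by
  intro l
  induction l with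
  | nil => intro h; exact absurd rfl h
  | cons a l ih =>
    intro _
    cases l with
    | nil =>
        intro x hx
        exact subset_convexHull ℝ _ ⟨a, List.mem_singleton.2 rfl, hx.1, hx.2⟩
    | cons b l' =>
        refine convexHull_min (Set.union_subset ?_ ?_) (convex_convexHull ℝ _)
        · intro x hx
          exact subset_convexHull ℝ _ ⟨a, List.mem_cons_self, hx.1, hx.2⟩
        · refine (ih (List.cons_ne_nil _ _)).trans (convexHull_mono ?_)
          rintro y ⟨j, hj, hy⟩
          exact ⟨j, List.mem_cons_of_mem _ hj, hy⟩

end Stmt13Aux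
namespace Stmt13Aux

lemma sum_update_split {n : ℕ} (c x' : Fin n → ℝ) (j : Fin n) :
    ∑ l, c l * x' l = c j * x' j + ∑ l, Function.update c j 0 l * x' l := by
  have h1 : ∑ l, Function.update c j 0 l * x' l
      = ∑ l ∈ Finset.univ.erase j, Function.update c j 0 l * x' l
        + Function.update c j 0 j * x' j := by
    rw [Finset.sum_erase_add]
    exact Finset.mem_univ j
  have h2 : ∑ l, c l * x' l = ∑ l ∈ Finset.univ.erase j, c l * x' l + c j * x' j := by
    rw [Finset.sum_erase_add]
    exact Finset.mem_univ j
  have h3 : ∑ l ∈ Finset.univ.erase j, Function.update c j 0 l * x' l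
      = ∑ l ∈ Finset.univ.erase j, c l * x' l := by
    refine Finset.sum_congr rfl fun l hl => ?_
    have hlj : l ≠ j := Finset.ne_of_mem_erase hl
    rw [Function.update_of_ne hlj]
  rw [h1, h3, Function.update_self, h2]
  ring

lemma halfspace_convex {n : ℕ} (c : Fin n → ℝ) (δ : ℝ) :
    Convex ℝ {y : Fin n → ℝ | δ ≤ ∑ i', c i' * y i'} := by
  refine convex_halfSpace_ge ⟨fun y z => ?_, fun r y => ?_⟩ δ
  · simp [mul_add, Finset.sum_add_distrib]
  · simp only [Pi.smul_apply, smul_eq_mul, Finset.mul_sum]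
    exact Finset.sum_congr rfl fun i _ => by ring

open Classical in
lemma part1 {m n : ℕ} (hm : 0 < m) (hn : 0 < n) (A : Matrix (Fin m) (Fin n) ℝ)
    (hA01 : ∀ i j, A i j = 0 ∨ A i j = 1) (hrow : ∀ i, ∃ j, A i j = 1) :
    ∀ (k : ℕ) (c : Fin n → ℝ) (δ : ℝ), (∀ i, 0 ≤ c i) → PitchLE c δ k →
      (∀ x, (x ∈ CubeVerts n ∧ ∀ i, 1 ≤ ∑ j, A i j * x j) → δ ≤ ∑ i, c i * x i) →
      ∀ x ∈ (canonCNF hn A).iterApp k (Set.Icc (0 : Fin n → ℝ) 1), δ ≤ ∑ i, c i * x i := by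
  intro k
  induction k with
  | zero =>
    intro c δ hc hp hv x hx
    have hδ : δ ≤ 0 := by simpa using hp ∅ (by simp) (by simp)
    have hx0 : (0 : Fin n → ℝ) ≤ x := (hx : x ∈ Set.Icc _ _).1
    have hnn : 0 ≤ ∑ i, c i * x i :=
      Finset.sum_nonneg fun i _ => mul_nonneg (hc i) (hx0 i)
    linarith
  | succ k ih =>
    intro c δ hc hp hv x hx
    by_cases hδ : δ ≤ 0
    · have hxI := iterApp_subset_Icc (canonCNF hn A) (k+1) hx
      have hx0 : (0 : Fin n → ℝ) ≤ x := hxI.1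
      have hnn : 0 ≤ ∑ i, c i * x i :=
        Finset.sum_nonneg fun i _ => mul_nonneg (hc i) (hx0 i)
      linarith
    push_neg at hδ
    have hgood : ∃ i, ∀ j, A i j = 1 → c j ≠ 0 := by
      by_contra hcon
      push_neg at hcon
      set x0 : Fin n → ℝ := fun j => if c j = 0 then 1 else 0 with hx0def
      have hx0 : x0 ∈ CubeVerts n := by
        intro i; by_cases h : c i = 0 <;> simp [x0, h]
      have hrows : ∀ i, 1 ≤ ∑ j, A i j * x0 j := by
        intro i
        obtain ⟨j, hj1, hj0⟩ := hcon i
        have hterm : A i j * x0 j = 1 := by simp [x0, hj0, hj1]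
        have hle : A i j * x0 j ≤ ∑ j', A i j' * x0 j' := by
          refine Finset.single_le_sum (f := fun j' => A i j' * x0 j') (fun j' _ => ?_) (Finset.mem_univ j)
          refine mul_nonneg ?_ ?_
          · rcases hA01 i j' with h|h <;> simp [h]
          · by_cases h : c j' = 0 <;> simp [x0, h]
        linarith
      have hvx := hv x0 ⟨hx0, hrows⟩
      have hzero : ∑ i, c i * x0 i = 0 := by
        refine Finset.sum_eq_zero fun i _ => ?_
        by_cases h : c i = 0 <;> simp [x0, h]
      rw [hzero] at hvx; linarith
    obtain ⟨i, hi⟩ := hgood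
    have hxcl : x ∈ (bigOr (Fml.pos ⟨0, hn⟩)
        ((Finset.univ.filter fun j => A i j = 1).sort (· ≤ ·))).app
          ((canonCNF hn A).iterApp k (Set.Icc 0 1)) := by
      have hmem : (bigOr (Fml.pos ⟨0,hn⟩) ((Finset.univ.filter fun j => A i j = 1).sort (· ≤ ·)))
          ∈ (((Finset.univ : Finset (Fin m)).sort (· ≤ ·)).map fun i' =>
              bigOr (Fml.pos ⟨0,hn⟩) ((Finset.univ.filter fun j => A i' j = 1).sort (· ≤ ·))) :=
        List.mem_map.2 ⟨i, by simp [Finset.mem_sort], rfl⟩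
      exact bigAnd_app_subset _ _ _ _ hmem hx
    have hjlne : ((Finset.univ.filter fun j => A i j = 1).sort (· ≤ ·)) ≠ [] := by
      obtain ⟨j, hj⟩ := hrow i
      intro hnil
      have hjm : j ∈ ((Finset.univ.filter fun j => A i j = 1).sort (· ≤ ·)) := by
        simp [Finset.mem_sort, Finset.mem_filter, hj]
      rw [hnil] at hjm; cases hjm
    have hxconv := bigOr_app_subset _ _ _ hjlne hxcl
    refine convexHull_min ?_ (halfspace_convex c δ) hxconv
    rintro y ⟨j, hjmem, hyQ, hyj⟩
    have hAij : A i j = 1 := by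
      have := (Finset.mem_sort (α := Fin n) (· ≤ ·)).1 hjmem
      exact (Finset.mem_filter.1 this).2
    have hcj : c j ≠ 0 := hi j hAij
    have hcj0 : 0 ≤ c j := hc j
    set c' := Function.update c j 0 with hc'def
    have hc' : ∀ l, 0 ≤ c' l := by
      intro l
      rcases eq_or_ne l j with rfl | h
      · simp [c']
      · simpa [c', Function.update_of_ne h] using hc l
    have hp' : PitchLE c' (δ - c j) k := by
      intro J hJ hcard
      have hjJ : j ∉ J := fun hmem => hJ j hmem (by simp [c'])
      have h2 := hp (insert j J) ?_ ?_
      · rw [Finset.sum_insert hjJ] at h2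
        have hsc : ∑ l ∈ J, c l = ∑ l ∈ J, c' l := by
          refine Finset.sum_congr rfl fun l hl => ?_
          have : l ≠ j := fun h => hjJ (h ▸ hl)
          simp [c', Function.update_of_ne this]
        linarith
      · intro l hl
        rcases Finset.mem_insert.1 hl with rfl | hl'
        · exact hcj
        · have := hJ l hl'
          have hlj : l ≠ j := fun h => hjJ (h ▸ hl')
          simpa [c', Function.update_of_ne hlj] using this
      · rw [Finset.card_insert_of_notMem hjJ]
        omega
    have hv' : ∀ x', (x' ∈ CubeVerts n ∧ ∀ i', 1 ≤ ∑ j', A i' j' * x' j') →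
        δ - c j ≤ ∑ l, c' l * x' l := by
      intro x' hx'
      have hsplit := sum_update_split c x' j
      have hvx := hv x' hx'
      rcases hx'.1 j with h0 | h1
      · rw [h0] at hsplit
        have : ∑ l, c l * x' l = ∑ l, c' l * x' l := by rw [hsplit]; ring
        linarith
      · rw [h1] at hsplit
        have : ∑ l, c' l * x' l = ∑ l, c l * x' l - c j := by rw [hsplit]; ring
        linarith
    have hIH := ih c' (δ - c j) hc' hp' hv' y hyQ
    have hsplit := sum_update_split c y j
    rw [hyj] at hsplit
    have hfin : ∑ l, c l * y l = c j + ∑ l, c' l * y l := by rw [hsplit]; ring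
    show δ ≤ ∑ i', c i' * y i'
    linarith

end Stmt13Aux
namespace Stmt13Aux

/-- The face of the cube where all coordinates in `J` equal 1. -/
def Face {n : ℕ} (J : Finset (Fin n)) : Set (Fin n → ℝ) := {x | ∀ j ∈ J, x j = 1}

lemma face_empty {n : ℕ} : Face (∅ : Finset (Fin n)) = Set.univ := by
  ext x; simp [Face]

/-- Value of a linear row on split variables. -/
def rval {n : ℕ} {κ : Type} [Fintype κ] (a : Fin n ⊕ κ → ℝ) (x : Fin n → ℝ) (z : κ → ℝ) : ℝ :=
  (∑ l, a (Sum.inl l) * x l) + ∑ v, a (Sum.inr v) * z v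

lemma rval_smul {n : ℕ} {κ : Type} [Fintype κ] (a : Fin n ⊕ κ → ℝ) (c : ℝ)
    (x : Fin n → ℝ) (z : κ → ℝ) :
    rval a (fun l => c * x l) (fun v => c * z v) = c * rval a x z := by
  simp only [rval, mul_add, Finset.mul_sum]
  congr 1 <;> exact Finset.sum_congr rfl fun _ _ => by ring

lemma rval_add {n : ℕ} {κ : Type} [Fintype κ] (a : Fin n ⊕ κ → ℝ)
    (x1 x2 : Fin n → ℝ) (z1 z2 : κ → ℝ) :
    rval a (fun l => x1 l + x2 l) (fun v => z1 v + z2 v) = rval a x1 z1 + rval a x2 z2 := by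
  simp only [rval, mul_add, Finset.sum_add_distrib]
  ring

/-- Nice extended formulations: systems `a y ≥ μ b` on variables `(x, z)` such that at
scale `μ = 1` the projection equals `X`, and at any scale `μ` the x-part is forced into
`[0, μ]^n` and pinned to `μ` on coordinates of `J`. -/
def GEF {n : ℕ} (J : Finset (Fin n)) (s : ℕ) (X : Set (Fin n → ℝ)) : Prop :=
  ∃ (κ ι : Type) (_ : Fintype κ) (_ : Fintype ι), Fintype.card ι ≤ s ∧
    ∃ (a : ι → Fin n ⊕ κ → ℝ) (b : ι → ℝ),
      (X = {x | ∃ z : κ → ℝ, ∀ i, b i ≤ rval (a i) x z}) ∧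
      (∀ (μ : ℝ) (x : Fin n → ℝ) (z : κ → ℝ), (∀ i, μ * b i ≤ rval (a i) x z) →
        (∀ l, 0 ≤ x l ∧ x l ≤ μ) ∧ ∀ j ∈ J, x j = μ)

lemma GEF.mono_size {n : ℕ} {J : Finset (Fin n)} {s s' : ℕ} {X : Set (Fin n → ℝ)}
    (hss : s ≤ s') (h : GEF J s X) : GEF J s' X := by
  obtain ⟨κ, ι, hκ, hι, hcard, rest⟩ := h
  exact ⟨κ, ι, hκ, hι, hcard.trans hss, rest⟩

lemma GEF.weaken {n : ℕ} {J J' : Finset (Fin n)} {s : ℕ} {X : Set (Fin n → ℝ)}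
    (hJJ : J ⊆ J') (h : GEF J' s X) : GEF J s X := by
  obtain ⟨κ, ι, hκ, hι, hcard, a, b, hP1, hP2⟩ := h
  exact ⟨κ, ι, hκ, hι, hcard, a, b, hP1, fun μ x z hr =>
    ⟨(hP2 μ x z hr).1, fun j hj => (hP2 μ x z hr).2 j (hJJ hj)⟩⟩

lemma GEF.convex {n : ℕ} {J : Finset (Fin n)} {s : ℕ} {X : Set (Fin n → ℝ)}
    (h : GEF J s X) : Convex ℝ X := by
  obtain ⟨κ, ι, hκ, hι, hcard, a, b, hP1, hP2⟩ := h
  rw [hP1]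
  rintro x ⟨zx, hzx⟩ y ⟨zy, hzy⟩ α β hα hβ hαβ
  refine ⟨fun v => α * zx v + β * zy v, fun i => ?_⟩
  have hx' := mul_le_mul_of_nonneg_left (hzx i) hα
  have hy' := mul_le_mul_of_nonneg_left (hzy i) hβ
  have hval : rval (a i) (α • x + β • y) (fun v => α * zx v + β * zy v)
      = α * rval (a i) x zx + β * rval (a i) y zy := by
    have h1 : rval (a i) (α • x + β • y) (fun v => α * zx v + β * zy v)
        = rval (a i) (fun l => α * x l + β * y l) (fun v => α * zx v + β * zy v) := rfl
    rw [h1, rval_add (a i) (fun l => α * x l) (fun l => β * y l)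
      (fun v => α * zx v) (fun v => β * zy v), rval_smul, rval_smul]
  calc b i = α * b i + β * b i := by rw [← add_mul, hαβ, one_mul]
    _ ≤ α * rval (a i) x zx + β * rval (a i) y zy := add_le_add hx' hy'
    _ = _ := hval.symm

end Stmt13Aux
namespace Stmt13Aux

lemma GEF.inter {n : ℕ} {J : Finset (Fin n)} {s1 s2 : ℕ} {X1 X2 : Set (Fin n → ℝ)}
    (h1 : GEF J s1 X1) (h2 : GEF J s2 X2) : GEF J (s1 + s2) (X1 ∩ X2) := by
  obtain ⟨κ1, ι1, hκ1, hι1, hcard1, a1, b1, hP11, hP21⟩ := h1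
  obtain ⟨κ2, ι2, hκ2, hι2, hcard2, a2, b2, hP12, hP22⟩ := h2
  refine ⟨κ1 ⊕ κ2, ι1 ⊕ ι2, inferInstance, inferInstance, ?_, ?_, ?_, ?_, ?_⟩
  · simpa [Fintype.card_sum] using Nat.add_le_add hcard1 hcard2
  · exact Sum.elim
      (fun i => Sum.elim (fun l => a1 i (Sum.inl l))
        (Sum.elim (fun w => a1 i (Sum.inr w)) (fun _ => 0)))
      (fun i => Sum.elim (fun l => a2 i (Sum.inl l))
        (Sum.elim (fun _ => 0) (fun w => a2 i (Sum.inr w))))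
  · exact Sum.elim b1 b2
  · show X1 ∩ X2 = _
    have key1 : ∀ (i : ι1) (x : Fin n → ℝ) (z : κ1 ⊕ κ2 → ℝ),
        rval (Sum.elim (fun l => a1 i (Sum.inl l))
          (Sum.elim (fun w => a1 i (Sum.inr w)) (fun _ => (0:ℝ)))) x z
        = rval (a1 i) x (z ∘ Sum.inl) := by
      intro i x z
      simp [rval, Fintype.sum_sum_type, Function.comp]
    have key2 : ∀ (i : ι2) (x : Fin n → ℝ) (z : κ1 ⊕ κ2 → ℝ),
        rval (Sum.elim (fun l => a2 i (Sum.inl l))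
          (Sum.elim (fun _ => (0:ℝ)) (fun w => a2 i (Sum.inr w)))) x z
        = rval (a2 i) x (z ∘ Sum.inr) := by
      intro i x z
      simp [rval, Fintype.sum_sum_type, Function.comp]
    ext x
    constructor
    · rintro ⟨hx1, hx2⟩
      rw [hP11] at hx1; rw [hP12] at hx2
      obtain ⟨z1, hz1⟩ := hx1
      obtain ⟨z2, hz2⟩ := hx2
      refine ⟨Sum.elim z1 z2, fun i => ?_⟩
      cases i with
      | inl i => simpa [key1] using hz1 i
      | inr i => simpa [key2] using hz2 i
    · rintro ⟨z, hz⟩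
      constructor
      · rw [hP11]
        exact ⟨z ∘ Sum.inl, fun i => by simpa [key1] using hz (Sum.inl i)⟩
      · rw [hP12]
        exact ⟨z ∘ Sum.inr, fun i => by simpa [key2] using hz (Sum.inr i)⟩
  · intro μ x z hr
    have key1 : ∀ (i : ι1),
        rval (Sum.elim (fun l => a1 i (Sum.inl l))
          (Sum.elim (fun w => a1 i (Sum.inr w)) (fun _ => (0:ℝ)))) x z
        = rval (a1 i) x (z ∘ Sum.inl) := by
      intro i
      simp [rval, Fintype.sum_sum_type, Function.comp]
    exact hP21 μ x (z ∘ Sum.inl) fun i => by simpa [key1] using hr (Sum.inl i)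

end Stmt13Aux
namespace Stmt13Aux

lemma GEF.join {n : ℕ} (hn : 0 < n) {J : Finset (Fin n)} {s1 s2 : ℕ}
    {X1 X2 : Set (Fin n → ℝ)}
    (h1 : GEF J s1 X1) (h2 : GEF J s2 X2) (hne1 : X1.Nonempty) (hne2 : X2.Nonempty) :
    GEF J (s1 + s2) (convexHull ℝ (X1 ∪ X2)) := by
  obtain ⟨κ1, ι1, hκ1, hι1, hcard1, a1, b1, hP11, hP21⟩ := h1
  obtain ⟨κ2, ι2, hκ2, hι2, hcard2, a2, b2, hP12, hP22⟩ := h2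
  have hX1c : Convex ℝ X1 := by
    rw [hP11]
    exact (GEF.convex (J := J) (s := s1) ⟨κ1, ι1, hκ1, hι1, hcard1, a1, b1, rfl, hP21⟩)
  have hX2c : Convex ℝ X2 := by
    rw [hP12]
    exact (GEF.convex (J := J) (s := s2) ⟨κ2, ι2, hκ2, hι2, hcard2, a2, b2, rfl, hP22⟩)
  classical
  -- variable space: x ⊕ (κ1 ⊕ ((Fin n ⊕ κ2) ⊕ Unit))
  -- accessors
  set W : ((κ1 ⊕ ((Fin n ⊕ κ2) ⊕ Unit)) → ℝ) → κ1 → ℝ := fun z => z ∘ Sum.inl with hW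
  set XX : ((κ1 ⊕ ((Fin n ⊕ κ2) ⊕ Unit)) → ℝ) → Fin n → ℝ := fun z l => z (Sum.inr (Sum.inl (Sum.inl l))) with hXX
  set ZZ : ((κ1 ⊕ ((Fin n ⊕ κ2) ⊕ Unit)) → ℝ) → κ2 → ℝ := fun z v => z (Sum.inr (Sum.inl (Sum.inr v))) with hZZ
  set LL : ((κ1 ⊕ ((Fin n ⊕ κ2) ⊕ Unit)) → ℝ) → ℝ := fun z => z (Sum.inr (Sum.inr (default : Unit))) with hLL
  set a' : ι1 ⊕ ι2 → Fin n ⊕ (κ1 ⊕ ((Fin n ⊕ κ2) ⊕ Unit)) → ℝ := Sum.elim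
    (fun i => Sum.elim (fun l => a1 i (Sum.inl l))
      (Sum.elim (fun w => a1 i (Sum.inr w))
        (Sum.elim (Sum.elim (fun l => -(a1 i (Sum.inl l))) (fun _ => 0))
          (fun _ => b1 i))))
    (fun i => Sum.elim (fun _ => 0)
      (Sum.elim (fun _ => 0)
        (Sum.elim (Sum.elim (fun l => a2 i (Sum.inl l)) (fun v => a2 i (Sum.inr v)))
          (fun _ => -(b2 i))))) with ha'
  set b' : ι1 ⊕ ι2 → ℝ := Sum.elim b1 (fun _ => 0) with hb'
  have key1 : ∀ (i : ι1) (x : Fin n → ℝ) (z : κ1 ⊕ ((Fin n ⊕ κ2) ⊕ Unit) → ℝ),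
      rval (a' (Sum.inl i)) x z
        = rval (a1 i) (fun l => x l - XX z l) (W z) + b1 i * LL z := by
    intro i x z
    simp only [ha', hW, hXX, hLL, Sum.elim_inl, Sum.elim_inr, rval, Fintype.sum_sum_type,
      Finset.univ_unique, Finset.sum_singleton, Function.comp, mul_sub,
      Finset.sum_sub_distrib, neg_mul, Finset.sum_neg_distrib, zero_mul,
      Finset.sum_const_zero]
    ring
  have key2 : ∀ (i : ι2) (x : Fin n → ℝ) (z : κ1 ⊕ ((Fin n ⊕ κ2) ⊕ Unit) → ℝ),
      rval (a' (Sum.inr i)) x z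
        = rval (a2 i) (XX z) (ZZ z) - b2 i * LL z := by
    intro i x z
    simp only [ha', hXX, hZZ, hLL, Sum.elim_inl, Sum.elim_inr, rval, Fintype.sum_sum_type,
      Finset.univ_unique, Finset.sum_singleton, Function.comp, neg_mul, zero_mul,
      Finset.sum_const_zero]
    ring
  refine ⟨κ1 ⊕ ((Fin n ⊕ κ2) ⊕ Unit), ι1 ⊕ ι2, inferInstance, inferInstance, ?_, a', b', ?_, ?_⟩
  · simpa [Fintype.card_sum] using Nat.add_le_add hcard1 hcard2
  · -- P1
    ext x
    constructor
    · intro hx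
      rw [hX1c.convexHull_union hX2c hne1 hne2, mem_convexJoin] at hx
      obtain ⟨p, hp, q, hq, hseg⟩ := hx
      obtain ⟨α, β, hα, hβ, hαβ, rfl⟩ := hseg
      rw [hP11] at hp; rw [hP12] at hq
      obtain ⟨zp, hzp⟩ := hp
      obtain ⟨zq, hzq⟩ := hq
      refine ⟨Sum.elim (fun v => α * zp v)
        (Sum.elim (Sum.elim (fun l => β * q l) (fun v => β * zq v)) (fun _ => β)), fun i => ?_⟩
      cases i with
      | inl i =>
          rw [key1]
          have hxe : (fun l => (α • p + β • q) l - β * q l) = fun l => α * p l := by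
            funext l; simp only [Pi.add_apply, Pi.smul_apply, smul_eq_mul]; ring
          show b1 i ≤ rval (a1 i) (fun l => (α • p + β • q) l - β * q l) (fun v => α * zp v)  + b1 i * β
          rw [hxe, rval_smul]
          have h := mul_le_mul_of_nonneg_left (hzp i) hα
          have hsum : α * b1 i + β * b1 i = b1 i := by rw [← add_mul, hαβ, one_mul]
          linarith
      | inr i =>
          rw [key2]
          show (0:ℝ) ≤ rval (a2 i) (fun l => β * q l) (fun v => β * zq v) - b2 i * β
          rw [rval_smul]
          have h := mul_le_mul_of_nonneg_left (hzq i) hβ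
          linarith
    · rintro ⟨z, hz⟩
      have hb2r : ∀ i, LL z * b2 i ≤ rval (a2 i) (XX z) (ZZ z) := by
        intro i
        have := hz (Sum.inr i)
        rw [key2] at this
        simp only [hb', Sum.elim_inr] at this
        linarith [this]
      have h2P := hP22 (LL z) (XX z) (ZZ z) hb2r
      have hb1r : ∀ i, (1 - LL z) * b1 i ≤ rval (a1 i) (fun l => x l - XX z l) (W z) := by
        intro i
        have := hz (Sum.inl i)
        rw [key1] at this
        simp only [hb', Sum.elim_inl] at this
        linarith
      have h1P := hP21 (1 - LL z) (fun l => x l - XX z l) (W z) hb1r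
      have hlam0 : 0 ≤ LL z := le_trans (h2P.1 ⟨0, hn⟩).1 (h2P.1 ⟨0, hn⟩).2
      have hlam1 : LL z ≤ 1 := by
        have ha := (h1P.1 ⟨0, hn⟩).1
        have hb := (h1P.1 ⟨0, hn⟩).2
        linarith
      rcases eq_or_lt_of_le hlam0 with hl0 | hl0
      · -- lam = 0 : x ∈ X1
        have hx2z : ∀ l, XX z l = 0 := by
          intro l
          have h1 := (h2P.1 l).1
          have h2 := (h2P.1 l).2
          rw [← hl0] at h2
          linarith
        have hx1 : x ∈ X1 := by
          rw [hP11]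
          refine ⟨W z, fun i => ?_⟩
          have := hb1r i
          rw [← hl0] at this
          simp only [sub_zero, one_mul] at this
          have hxe : (fun l => x l - XX z l) = x := by
            funext l; rw [hx2z l, sub_zero]
          rwa [hxe] at this
        exact subset_convexHull ℝ _ (Set.mem_union_left _ hx1)
      rcases eq_or_lt_of_le hlam1 with hl1 | hl1
      · -- lam = 1 : x ∈ X2
        have hxx2 : ∀ l, x l = XX z l := by
          intro l
          have h1 := (h1P.1 l).1
          have h2 := (h1P.1 l).2
          rw [hl1] at h2
          simp only [sub_self] at h2
          linarith
        have hx2 : x ∈ X2 := by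
          rw [hP12]
          refine ⟨ZZ z, fun i => ?_⟩
          have := hb2r i
          rw [hl1, one_mul] at this
          have hxe : XX z = x := by funext l; rw [hxx2 l]
          rwa [hxe] at this
        exact subset_convexHull ℝ _ (Set.mem_union_right _ hx2)
      · -- 0 < lam < 1
        set lam := LL z
        have h1lam : 0 < 1 - lam := by linarith
        set p : Fin n → ℝ := fun l => (1 - lam)⁻¹ * (x l - XX z l) with hpdef
        set q : Fin n → ℝ := fun l => lam⁻¹ * XX z l with hqdef
        have hpX : p ∈ X1 := by
          rw [hP11]
          refine ⟨fun v => (1 - lam)⁻¹ * W z v, fun i => ?_⟩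
          rw [hpdef]
          rw [rval_smul (a1 i) ((1-lam)⁻¹) (fun l => x l - XX z l) (W z)]
          have := mul_le_mul_of_nonneg_left (hb1r i) (le_of_lt (inv_pos.2 h1lam))
          calc b1 i = (1-lam)⁻¹ * ((1-lam) * b1 i) := by field_simp
            _ ≤ _ := this
        have hqX : q ∈ X2 := by
          rw [hP12]
          refine ⟨fun v => lam⁻¹ * ZZ z v, fun i => ?_⟩
          rw [hqdef]
          rw [rval_smul (a2 i) (lam⁻¹) (XX z) (ZZ z)]
          have := mul_le_mul_of_nonneg_left (hb2r i) (le_of_lt (inv_pos.2 hl0))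
          calc b2 i = lam⁻¹ * (lam * b2 i) := by field_simp
            _ ≤ _ := this
        have hcomb : x = (1 - lam) • p + lam • q := by
          funext l
          simp only [Pi.add_apply, Pi.smul_apply, smul_eq_mul, hpdef, hqdef]
          field_simp
          ring
        rw [hcomb]
        exact (convex_convexHull ℝ (X1 ∪ X2))
          (subset_convexHull ℝ _ (Set.mem_union_left _ hpX))
          (subset_convexHull ℝ _ (Set.mem_union_right _ hqX))
          (by linarith) hlam0 (by ring)
  · -- P2
    intro μ x z hr
    have hb2r : ∀ i, LL z * b2 i ≤ rval (a2 i) (XX z) (ZZ z) := by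
      intro i
      have := hr (Sum.inr i)
      rw [key2] at this
      simp only [hb', Sum.elim_inr, mul_zero] at this
      linarith
    have h2P := hP22 (LL z) (XX z) (ZZ z) hb2r
    have hb1r : ∀ i, (μ - LL z) * b1 i ≤ rval (a1 i) (fun l => x l - XX z l) (W z) := by
      intro i
      have := hr (Sum.inl i)
      rw [key1] at this
      simp only [hb', Sum.elim_inl] at this
      linarith
    have h1P := hP21 (μ - LL z) (fun l => x l - XX z l) (W z) hb1r
    constructor
    · intro l
      have ha := (h1P.1 l).1
      have hb := (h1P.1 l).2
      have hc := (h2P.1 l).1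
      have hd := (h2P.1 l).2
      constructor <;> linarith
    · intro j hj
      have ha := h1P.2 j hj
      have hb := h2P.2 j hj
      linarith

end Stmt13Aux
namespace Stmt13Aux

lemma sum_erase_bound {n : ℕ} (hn : 0 < n) (x : Fin n → ℝ) (μ : ℝ)
    (hlow : ∀ l, μ ≤ x l) (hsum : ∑ l, x l ≤ n * μ) : ∀ l, x l ≤ μ := by
  intro l
  have h1 : x l + ∑ l' ∈ Finset.univ.erase l, x l' = ∑ l', x l' :=
    Finset.add_sum_erase _ _ (Finset.mem_univ l)
  have h2 : ((n : ℝ) - 1) * μ ≤ ∑ l' ∈ Finset.univ.erase l, x l' := by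
    have hc : (Finset.univ.erase l).card = n - 1 := by
      rw [Finset.card_erase_of_mem (Finset.mem_univ l), Finset.card_univ, Fintype.card_fin]
    have := Finset.card_nsmul_le_sum (Finset.univ.erase l) x μ (fun i _ => hlow i)
    rw [hc] at this
    have hcast : ((n - 1 : ℕ) : ℝ) = (n : ℝ) - 1 := by
      have : (1:ℕ) ≤ n := hn
      push_cast [Nat.cast_sub this]
      ring
    rw [nsmul_eq_mul, hcast] at this
    exact this
  nlinarith [h1, h2]

lemma gef_cube {n : ℕ} (hn : 0 < n) (hn2 : 2 ≤ n) (J : Finset (Fin n)) :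
    GEF J (2 * n) (Set.Icc 0 1 ∩ Face J) := by
  classical
  by_cases hJ : J = Finset.univ
  · -- J = univ : the face is the singleton {1}
    subst hJ
    refine ⟨Empty, Fin n ⊕ (Unit ⊕ Unit), inferInstance, inferInstance, ?_,
      Sum.elim (fun l => Sum.elim (fun l' => if l' = l then (1:ℝ) else 0) (fun e => 0))
        (Sum.elim (fun _ => Sum.elim (fun _ => (-1:ℝ)) (fun e => 0))
          (fun _ => Sum.elim (fun _ => (1:ℝ)) (fun e => 0))),
      Sum.elim (fun l => 1) (Sum.elim (fun _ => -(n:ℝ)) (fun _ => 0)), ?_, ?_⟩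
    · simp only [Fintype.card_sum, Fintype.card_fin, Fintype.card_unit]
      omega
    · ext x
      simp only [Set.mem_inter_iff, Set.mem_Icc, Set.mem_setOf_eq, Face]
      constructor
      · rintro ⟨⟨hx0, hx1⟩, hface⟩
        refine ⟨fun e => e.elim, fun i => ?_⟩
        rcases i with l | (u | u) <;>
          simp only [Sum.elim_inl, Sum.elim_inr, rval, Finset.univ_eq_empty,
            Finset.sum_empty, add_zero, ite_mul, one_mul, zero_mul,
            Finset.sum_ite_eq', Finset.mem_univ, if_true, neg_mul, Finset.sum_neg_distrib]
        · rw [hface l (Finset.mem_univ l)]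
        · have : ∀ l', x l' = 1 := fun l' => hface l' (Finset.mem_univ l')
          have hs : ∑ l', x l' = (n : ℝ) := by
            rw [Finset.sum_congr rfl fun l' _ => this l']
            simp
          rw [hs]
        · have : ∀ l', x l' = 1 := fun l' => hface l' (Finset.mem_univ l')
          have hs : ∑ l', x l' = (n : ℝ) := by
            rw [Finset.sum_congr rfl fun l' _ => this l']
            simp
          rw [hs]
          positivity
      · rintro ⟨z, hz⟩
        have hlow : ∀ l, (1:ℝ) ≤ x l := by
          intro l
          have := hz (Sum.inl l)
          simpa [rval, ite_mul, one_mul, zero_mul, Finset.sum_ite_eq'] using this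
        have hs : ∑ l, x l ≤ (n:ℝ) * 1 := by
          have := hz (Sum.inr (Sum.inl ()))
          simp only [Sum.elim_inl, Sum.elim_inr, rval, Finset.univ_eq_empty,
            Finset.sum_empty, add_zero, neg_mul, one_mul, Finset.sum_neg_distrib] at this
          linarith
        have hup := sum_erase_bound hn x 1 hlow hs
        have heq : ∀ l, x l = 1 := fun l => le_antisymm (hup l) (hlow l)
        exact ⟨⟨fun l => by rw [heq l]; norm_num, fun l => le_of_eq (heq l)⟩,
          fun j _ => heq j⟩
    · intro μ x z hr
      have hlow : ∀ l, μ ≤ x l := by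
        intro l
        have := hr (Sum.inl l)
        simpa [rval, ite_mul, one_mul, zero_mul, Finset.sum_ite_eq'] using this
      have hs : ∑ l, x l ≤ (n:ℝ) * μ := by
        have := hr (Sum.inr (Sum.inl ()))
        simp only [Sum.elim_inl, Sum.elim_inr, rval, Finset.univ_eq_empty,
          Finset.sum_empty, add_zero, neg_mul, one_mul, Finset.sum_neg_distrib,
          mul_neg] at this
        linarith
      have hs0 : (0:ℝ) ≤ ∑ l, x l := by
        have := hr (Sum.inr (Sum.inr ()))
        simp only [Sum.elim_inl, Sum.elim_inr, rval, Finset.univ_eq_empty,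
          Finset.sum_empty, add_zero, one_mul, mul_zero] at this
        linarith
      have hμ0 : 0 ≤ μ := by
        have hnpos : (0:ℝ) < n := by exact_mod_cast hn
        nlinarith
      have hup := sum_erase_bound hn x μ hlow hs
      exact ⟨fun l => ⟨le_trans hμ0 (hlow l), hup l⟩,
        fun j _ => le_antisymm (hup j) (hlow j)⟩
  · -- J ≠ univ
    obtain ⟨l0, hl0⟩ : ∃ l0, l0 ∉ J := by
      by_contra h; push_neg at h; exact hJ (Finset.eq_univ_iff_forall.2 h)
    refine ⟨Empty, Fin n ⊕ Fin n, inferInstance, inferInstance, ?_,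
      Sum.elim (fun l => Sum.elim (fun l' => if l' = l then (1:ℝ) else 0) (fun e => 0))
        (fun l => Sum.elim (fun l' => if l' = l then (-1:ℝ) else 0) (fun e => 0)),
      Sum.elim (fun l => if l ∈ J then (1:ℝ) else 0) (fun _ => (-1:ℝ)), ?_, ?_⟩
    · simp [Fintype.card_sum]; omega
    · ext x
      simp only [Set.mem_inter_iff, Set.mem_Icc, Set.mem_setOf_eq, Face]
      constructor
      · rintro ⟨⟨hx0, hx1⟩, hface⟩
        refine ⟨fun e => e.elim, fun i => ?_⟩
        rcases i with l | l <;>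
          simp only [Sum.elim_inl, Sum.elim_inr, rval, Finset.univ_eq_empty,
            Finset.sum_empty, add_zero, ite_mul, one_mul, zero_mul, neg_mul,
            Finset.sum_ite_eq', Finset.mem_univ, if_true]
        · by_cases h : l ∈ J
          · simp only [h, if_true]
            exact le_of_eq (hface l h).symm
          · simp only [h, if_false]
            exact hx0 l
        · exact neg_le_neg (hx1 l)
      · rintro ⟨z, hz⟩
        have hup : ∀ l, x l ≤ 1 := by
          intro l
          have := hz (Sum.inr l)
          simp only [Sum.elim_inl, Sum.elim_inr, rval, Finset.univ_eq_empty,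
            Finset.sum_empty, add_zero, ite_mul, one_mul, zero_mul, neg_mul,
            Finset.sum_ite_eq', Finset.mem_univ, if_true] at this
          linarith
        have hlowJ : ∀ l, (if l ∈ J then (1:ℝ) else 0) ≤ x l := by
          intro l
          have := hz (Sum.inl l)
          simpa [rval, ite_mul, one_mul, zero_mul, Finset.sum_ite_eq'] using this
        have hlow0 : ∀ l, (0:ℝ) ≤ x l := by
          intro l
          have := hlowJ l
          by_cases h : l ∈ J
          · simp only [h, if_true] at this; linarith
          · simpa [h] using this
        refine ⟨⟨fun l => hlow0 l, fun l => hup l⟩, fun j hj => ?_⟩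
        have := hlowJ j
        simp only [hj, if_true] at this
        exact le_antisymm (hup j) this
    · intro μ x z hr
      have hup : ∀ l, x l ≤ μ := by
        intro l
        have := hr (Sum.inr l)
        simp only [Sum.elim_inl, Sum.elim_inr, rval, Finset.univ_eq_empty,
          Finset.sum_empty, add_zero, mul_neg, mul_one, ite_mul, one_mul,
          zero_mul, neg_mul, Finset.sum_ite_eq', Finset.mem_univ, if_true] at this
        linarith
      have hlowJ : ∀ l, μ * (if l ∈ J then (1:ℝ) else 0) ≤ x l := by
        intro l
        have := hr (Sum.inl l)
        simpa [rval, ite_mul, one_mul, zero_mul, Finset.sum_ite_eq'] using this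
      have hμ0 : 0 ≤ μ := by
        have h1 := hlowJ l0
        simp only [hl0, if_false, mul_zero] at h1
        exact le_trans h1 (hup l0)
      refine ⟨fun l => ⟨?_, hup l⟩, fun j hj => ?_⟩
      · have := hlowJ l
        by_cases h : l ∈ J
        · simp only [h, if_true, mul_one] at this
          nlinarith
        · simpa [h] using this
      · have := hlowJ j
        simp only [hj, if_true, mul_one] at this
        exact le_antisymm (hup j) this

end Stmt13Aux
namespace Stmt13Aux

/-- Monotone (negation-free) formulas. -/
def MonoF {n : ℕ} : Fml n → Prop
  | .pos _ => True
  | .neg _ => False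
  | .and φ ψ => MonoF φ ∧ MonoF ψ
  | .or φ ψ => MonoF φ ∧ MonoF ψ

lemma one_mem_app {n : ℕ} (ψ : Fml n) (hm : MonoF ψ) {Q : Set (Fin n → ℝ)}
    (hQ1 : (1 : Fin n → ℝ) ∈ Q) : (1 : Fin n → ℝ) ∈ ψ.app Q := by
  induction ψ with
  | pos i => exact ⟨hQ1, rfl⟩
  | neg i => exact hm.elim
  | and φ ψ ih1 ih2 => exact ⟨ih1 hm.1, ih2 hm.2⟩
  | or φ ψ ih1 ih2 =>
      exact subset_convexHull ℝ _ (Set.mem_union_left _ (ih1 hm.1))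

lemma one_mem_face {n : ℕ} (J : Finset (Fin n)) : (1 : Fin n → ℝ) ∈ Face J :=
  fun _ _ => rfl

lemma face_convex {n : ℕ} (J : Finset (Fin n)) : Convex ℝ (Face J) := by
  intro x hx y hy α β hα hβ hαβ j hj
  simp only [Pi.add_apply, Pi.smul_apply, smul_eq_mul, hx j hj, hy j hj, mul_one]
  exact hαβ

lemma convexHull_union_inter_face {n : ℕ} {A B : Set (Fin n → ℝ)}
    (hA : A ⊆ Set.Icc 0 1) (hB : B ⊆ Set.Icc 0 1)
    (hAc : Convex ℝ A) (hBc : Convex ℝ B)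
    (hA1 : (1 : Fin n → ℝ) ∈ A) (hB1 : (1 : Fin n → ℝ) ∈ B) (J : Finset (Fin n)) :
    convexHull ℝ (A ∪ B) ∩ Face J = convexHull ℝ ((A ∩ Face J) ∪ (B ∩ Face J)) := by
  apply Set.Subset.antisymm
  · rintro x ⟨hxc, hxf⟩
    rw [hAc.convexHull_union hBc ⟨1, hA1⟩ ⟨1, hB1⟩, mem_convexJoin] at hxc
    obtain ⟨p, hp, q, hq, hseg⟩ := hxc
    obtain ⟨α, β, hα, hβ, hαβ, rfl⟩ := hseg
    rcases eq_or_lt_of_le hα with hα0 | hαpos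
    · have hβ1 : β = 1 := by linarith
      subst hβ1
      rw [← hα0]
      rw [← hα0] at hxf
      simp only [zero_smul, one_smul, zero_add] at hxf ⊢
      exact subset_convexHull ℝ _ (Set.mem_union_right _ ⟨hq, hxf⟩)
    rcases eq_or_lt_of_le hβ with hβ0 | hβpos
    · have hα1 : α = 1 := by linarith
      subst hα1
      rw [← hβ0]
      rw [← hβ0] at hxf
      simp only [zero_smul, one_smul, add_zero] at hxf ⊢
      exact subset_convexHull ℝ _ (Set.mem_union_left _ ⟨hp, hxf⟩)
    · have hpf : p ∈ Face J := by
        intro j hj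
        have hcomb := hxf j hj
        simp only [Pi.add_apply, Pi.smul_apply, smul_eq_mul] at hcomb
        have hp1 : p j ≤ 1 := (hA hp).2 j
        have hq1 : q j ≤ 1 := (hB hq).2 j
        nlinarith
      have hqf : q ∈ Face J := by
        intro j hj
        have hcomb := hxf j hj
        simp only [Pi.add_apply, Pi.smul_apply, smul_eq_mul] at hcomb
        have hp1 : p j ≤ 1 := (hA hp).2 j
        have hq1 : q j ≤ 1 := (hB hq).2 j
        nlinarith
      exact (convex_convexHull ℝ _)
        (subset_convexHull ℝ _ (Set.mem_union_left _ (Set.mem_inter hp hpf)))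
        (subset_convexHull ℝ _ (Set.mem_union_right _ (Set.mem_inter hq hqf))) hα hβ hαβ
  · refine Set.subset_inter ?_ ?_
    · exact convexHull_mono
        (Set.union_subset_union Set.inter_subset_left Set.inter_subset_left)
    · refine convexHull_min ?_ (face_convex J)
      exact Set.union_subset Set.inter_subset_right Set.inter_subset_right

lemma gef_app {n : ℕ} (hn : 0 < n) {Q : Set (Fin n → ℝ)} {s : ℕ}
    (hfam : ∀ J, GEF J s (Q ∩ Face J)) (hQ1 : (1 : Fin n → ℝ) ∈ Q)
    (hQI : Q ⊆ Set.Icc 0 1) (hQc : Convex ℝ Q) :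
    ∀ ψ : Fml n, MonoF ψ → ∀ J, GEF J (ψ.size * s) (ψ.app Q ∩ Face J) := by
  intro ψ
  induction ψ with
  | pos i =>
      intro hm J
      have h := (hfam (insert i J)).weaken (Finset.subset_insert i J)
      have hset : (Fml.pos i).app Q ∩ Face J = Q ∩ Face (insert i J) := by
        ext x
        show (x ∈ Q ∧ x i = 1) ∧ (∀ j ∈ J, x j = 1) ↔ x ∈ Q ∧ (∀ j ∈ insert i J, x j = 1)
        constructor
        · rintro ⟨⟨hq, hi⟩, hJ⟩
          refine ⟨hq, fun j hj => ?_⟩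
          rcases Finset.mem_insert.1 hj with rfl | hj
          · exact hi
          · exact hJ j hj
        · rintro ⟨hq, hins⟩
          exact ⟨⟨hq, hins i (Finset.mem_insert_self i J)⟩,
            fun j hj => hins j (Finset.mem_insert_of_mem hj)⟩
      rw [hset]
      exact h.mono_size (le_of_eq (one_mul s).symm)
  | neg i => intro hm; exact hm.elim
  | and φ ψ ih1 ih2 =>
      intro hm J
      have hset : (φ.and ψ).app Q ∩ Face J = (φ.app Q ∩ Face J) ∩ (ψ.app Q ∩ Face J) := by
        ext x
        show (x ∈ φ.app Q ∩ ψ.app Q) ∧ _ ↔ _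
        constructor
        · rintro ⟨⟨h1, h2⟩, hf⟩; exact ⟨⟨h1, hf⟩, ⟨h2, hf⟩⟩
        · rintro ⟨⟨h1, hf⟩, ⟨h2, _⟩⟩; exact ⟨⟨h1, h2⟩, hf⟩
      rw [hset]
      exact ((ih1 hm.1 J).inter (ih2 hm.2 J)).mono_size (le_of_eq (Nat.add_mul _ _ _).symm)
  | or φ ψ ih1 ih2 =>
      intro hm J
      have hA : φ.app Q ⊆ Set.Icc 0 1 := (app_subset φ hQc).trans hQI
      have hB : ψ.app Q ⊆ Set.Icc 0 1 := (app_subset ψ hQc).trans hQI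
      have hAc := app_convex φ hQc
      have hBc := app_convex ψ hQc
      have hA1 := one_mem_app φ hm.1 hQ1
      have hB1 := one_mem_app ψ hm.2 hQ1
      have hset : (φ.or ψ).app Q ∩ Face J
          = convexHull ℝ ((φ.app Q ∩ Face J) ∪ (ψ.app Q ∩ Face J)) :=
        convexHull_union_inter_face hA hB hAc hBc hA1 hB1 J
      rw [hset]
      refine (GEF.join hn (ih1 hm.1 J) (ih2 hm.2 J)
        ⟨1, hA1, one_mem_face J⟩ ⟨1, hB1, one_mem_face J⟩).mono_size
        (le_of_eq (Nat.add_mul _ _ _).symm)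

lemma one_mem_iterApp {n : ℕ} (ψ : Fml n) (hm : MonoF ψ) :
    ∀ k, (1 : Fin n → ℝ) ∈ ψ.iterApp k (Set.Icc 0 1)
  | 0 => Set.mem_Icc.2 ⟨zero_le_one, le_refl _⟩
  | (k+1) => one_mem_app ψ hm (one_mem_iterApp ψ hm k)

lemma gef_iter {n : ℕ} (hn : 0 < n) (hn2 : 2 ≤ n) (ψ : Fml n) (hm : MonoF ψ) :
    ∀ k J, GEF J (ψ.size ^ k * (2 * n)) (ψ.iterApp k (Set.Icc 0 1) ∩ Face J) := by
  intro k
  induction k with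
  | zero =>
      intro J
      exact (gef_cube hn hn2 J).mono_size (le_of_eq (by simp))
  | succ k ih =>
      intro J
      have h := gef_app hn (Q := ψ.iterApp k (Set.Icc 0 1)) ih
        (one_mem_iterApp ψ hm k) (iterApp_subset_Icc ψ k) (iterApp_convex ψ k) ψ hm J
      exact h.mono_size (le_of_eq (by rw [pow_succ]; ring))

end Stmt13Aux
namespace Stmt13Aux

lemma monoF_bigOr {n : ℕ} (j0 : Fin n) : ∀ l : List (Fin n), MonoF (bigOr (Fml.pos j0) l)
  | [] => trivial
  | [_] => trivial
  | _ :: j' :: l => ⟨trivial, monoF_bigOr j0 (j' :: l)⟩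

lemma monoF_bigAnd {n : ℕ} (j0 : Fin n) :
    ∀ L : List (Fml n), (∀ ψ ∈ L, MonoF ψ) → MonoF (bigAnd (Fml.pos j0) L)
  | [], _ => trivial
  | [ψ], h => h ψ (List.mem_singleton.2 rfl)
  | ψ :: ψ' :: L, h =>
      ⟨h ψ (List.mem_cons_self),
        monoF_bigAnd j0 (ψ' :: L) (fun a ha => h a (List.mem_cons_of_mem _ ha))⟩

lemma size_bigOr {n : ℕ} (d : Fml n) : ∀ l : List (Fin n), l ≠ [] → (bigOr d l).size = l.length
  | [_], _ => rfl
  | j :: j' :: l, _ => by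
      have h := size_bigOr d (j' :: l) (List.cons_ne_nil _ _)
      show (Fml.pos j).size + (bigOr d (j' :: l)).size = _
      rw [h]
      simp [Fml.size]
      omega

lemma size_bigAnd {n : ℕ} (d : Fml n) :
    ∀ L : List (Fml n), L ≠ [] → (bigAnd d L).size = (L.map Fml.size).sum
  | [], h => absurd rfl h
  | [ψ], _ => by simp [bigAnd]
  | ψ :: ψ' :: L, _ => by
      have h := size_bigAnd d (ψ' :: L) (List.cons_ne_nil _ _)
      show ψ.size + (bigAnd d (ψ' :: L)).size = _
      rw [h]
      simp [Fml.size]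

open Classical in
lemma monoF_canonCNF {m n : ℕ} (hn : 0 < n) (A : Matrix (Fin m) (Fin n) ℝ) :
    MonoF (canonCNF hn A) := by
  unfold canonCNF
  refine monoF_bigAnd _ _ fun ψ hψ => ?_
  obtain ⟨i, _, rfl⟩ := List.mem_map.1 hψ
  exact monoF_bigOr _ _

open Classical in
lemma size_canonCNF {m n : ℕ} (hm : 0 < m) (hn : 0 < n) (A : Matrix (Fin m) (Fin n) ℝ)
    (hrow : ∀ i, ∃ j, A i j = 1) : (canonCNF hn A).size ≤ m * n := by
  unfold canonCNF
  have hLne : (((Finset.univ : Finset (Fin m)).sort (· ≤ ·)).map fun i =>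
      bigOr (Fml.pos ⟨0, hn⟩) ((Finset.univ.filter fun j => A i j = 1).sort (· ≤ ·))) ≠ [] := by
    apply List.ne_nil_of_length_pos
    simp only [List.length_map, Finset.length_sort, Finset.card_univ, Fintype.card_fin]
    exact hm
  rw [size_bigAnd _ _ hLne]
  have hbound : ∀ x ∈ ((((Finset.univ : Finset (Fin m)).sort (· ≤ ·)).map fun i =>
      bigOr (Fml.pos ⟨0, hn⟩) ((Finset.univ.filter fun j => A i j = 1).sort (· ≤ ·))).map
        Fml.size), x ≤ n := by
    intro x hx
    rw [List.map_map] at hx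
    obtain ⟨i, _, rfl⟩ := List.mem_map.1 hx
    show ((fun i => bigOr (Fml.pos ⟨0, hn⟩)
      ((Finset.univ.filter fun j => A i j = 1).sort (· ≤ ·))) i).size ≤ n
    have hne : ((Finset.univ.filter fun j => A i j = 1).sort (· ≤ ·)) ≠ [] := by
      obtain ⟨j, hj⟩ := hrow i
      intro hnil
      have : j ∈ ((Finset.univ.filter fun j => A i j = 1).sort (· ≤ ·)) := by
        simp [Finset.mem_sort, Finset.mem_filter, hj]
      rw [hnil] at this; cases this
    rw [size_bigOr _ _ hne, Finset.length_sort]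
    calc (Finset.univ.filter fun j => A i j = 1).card ≤ (Finset.univ : Finset (Fin n)).card :=
          Finset.card_filter_le _ _
      _ = n := by simp
  have := List.sum_le_card_nsmul _ n hbound
  simp only [List.length_map, Finset.length_sort, Finset.card_univ, Fintype.card_fin,
    smul_eq_mul] at this
  exact this

end Stmt13Aux
namespace Stmt13Aux

lemma isEF_mono {n : ℕ} {P : Set (Fin n → ℝ)} {s s' : ℕ} (h : IsEF P s) (hss : s ≤ s') :
    IsEF P s' := by
  classical
  obtain ⟨d, T, A, t, b, hP⟩ := h
  refine ⟨d, T, fun r v => if hr : (r : ℕ) < s then A ⟨r, hr⟩ v else 0, t,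
    fun r => if hr : (r : ℕ) < s then b ⟨r, hr⟩ else 0, ?_⟩
  rw [hP]
  ext x
  constructor
  · rintro ⟨y, hy, hx⟩
    refine ⟨y, fun r => ?_, hx⟩
    by_cases hr : (r : ℕ) < s
    · simpa [Matrix.mulVec, dotProduct, dif_pos hr] using hy ⟨r, hr⟩
    · simp [Matrix.mulVec, dotProduct, dif_neg hr]
  · rintro ⟨y, hy, hx⟩
    refine ⟨y, fun r => ?_, hx⟩
    have h := hy ⟨(r : ℕ), lt_of_lt_of_le r.isLt hss⟩
    simp only [Matrix.mulVec, dotProduct] at h ⊢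
    simpa [r.isLt, Fin.eta] using h

lemma gef_toIsEF {n : ℕ} {X : Set (Fin n → ℝ)} {s : ℕ} (h : GEF (∅ : Finset (Fin n)) s X) :
    IsEF X s := by
  classical
  obtain ⟨κ, ι, hκ, hι, hcard, a, b, hP1, _⟩ := h
  set e := Fintype.card κ with he
  set ek : κ ≃ Fin e := Fintype.equivFin κ with hek
  set ei : ι ≃ Fin (Fintype.card ι) := Fintype.equivFin ι with hei
  -- first, an EF with exactly `card ι` rows
  have hEF : IsEF X (Fintype.card ι) := by
    refine ⟨n + e,
      (fun l v => if v = finSumFinEquiv (Sum.inl l) then 1 else 0),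
      (fun r v => a (ei.symm r) (Sum.map id ek.symm (finSumFinEquiv.symm v))),
      0,
      (fun r => b (ei.symm r)), ?_⟩
    have hT : ∀ (y : Fin (n + e) → ℝ) (l : Fin n),
        (Matrix.mulVec (fun l v => if v = finSumFinEquiv (Sum.inl l) then (1:ℝ) else 0) y) l
          = y (finSumFinEquiv (Sum.inl l)) := by
      intro y l
      simp [Matrix.mulVec, dotProduct, ite_mul, one_mul, zero_mul,
        Finset.sum_ite_eq']
      rw [Finset.sum_eq_single (Fin.castAdd e l) (fun b _ hb => by simp [hb]) (by simp)]
      simp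
    have hA : ∀ (y : Fin (n + e) → ℝ) (i : ι),
        (Matrix.mulVec (fun r v => a (ei.symm r) (Sum.map id ek.symm (finSumFinEquiv.symm v))) y)
          (ei i)
        = rval (a i) (fun l => y (finSumFinEquiv (Sum.inl l)))
            (fun w => y (finSumFinEquiv (Sum.inr (ek w)))) := by
      intro y i
      show ∑ v, a (ei.symm (ei i)) (Sum.map id ek.symm (finSumFinEquiv.symm v)) * y v = _
      rw [Equiv.symm_apply_apply]
      rw [← Equiv.sum_comp finSumFinEquiv
        (fun v => a i (Sum.map id ek.symm (finSumFinEquiv.symm v)) * y v)]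
      simp only [Equiv.symm_apply_apply]
      rw [Fintype.sum_sum_type]
      unfold rval
      congr 1
      rw [← Equiv.sum_comp ek
        (fun w => a i (Sum.map id ek.symm (Sum.inr w)) * y (finSumFinEquiv (Sum.inr w)))]
      simp [Sum.map]
    ext x
    rw [hP1]
    constructor
    · rintro ⟨z, hz⟩
      refine ⟨fun v => Sum.elim x (fun w => z (ek.symm w)) (finSumFinEquiv.symm v),
        fun r => ?_, ?_⟩
      · have hr := hA (fun v => Sum.elim x (fun w => z (ek.symm w)) (finSumFinEquiv.symm v))
          (ei.symm r)
        rw [Equiv.apply_symm_apply] at hr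
        rw [hr]
        have hx1 : (fun l => Sum.elim x (fun w => z (ek.symm w))
            (finSumFinEquiv.symm (finSumFinEquiv (Sum.inl l)))) = x := by
          funext l; rw [Equiv.symm_apply_apply]; rfl
        have hz1 : (fun w => Sum.elim x (fun w' => z (ek.symm w'))
            (finSumFinEquiv.symm (finSumFinEquiv (Sum.inr (ek w))))) = z := by
          funext w; rw [Equiv.symm_apply_apply]; simp
        rw [hx1, hz1]
        exact hz (ei.symm r)
      · funext l
        simp only [Pi.add_apply, Pi.zero_apply, add_zero]
        rw [hT]
        rw [Equiv.symm_apply_apply]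
        rfl
    · rintro ⟨y, hy, hx⟩
      refine ⟨fun w => y (finSumFinEquiv (Sum.inr (ek w))), fun i => ?_⟩
      have := hy (ei i)
      rw [hA] at this
      have hxy : (fun l => y (finSumFinEquiv (Sum.inl l))) = x := by
        funext l
        rw [hx]
        simp only [Pi.add_apply, Pi.zero_apply, add_zero]
        rw [hT]
      rw [hxy] at this
      simpa using this
  exact isEF_mono hEF hcard

end Stmt13Aux
namespace Stmt13Aux

lemma app_bigAnd_pos {n : ℕ} (j0 : Fin n) (d : Fml n) :
    ∀ L : List (Fml n), L ≠ [] → (∀ ψ ∈ L, ψ = Fml.pos j0) →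
      ∀ Q : Set (Fin n → ℝ), (bigAnd d L).app Q = {x ∈ Q | x j0 = 1}
  | [], h, _, _ => absurd rfl h
  | [ψ], _, h, Q => by
      rw [show bigAnd d [ψ] = ψ from rfl, h ψ (List.mem_singleton.2 rfl)]
      rfl
  | ψ :: ψ' :: L, _, h, Q => by
      have hIH := app_bigAnd_pos j0 d (ψ' :: L) (List.cons_ne_nil _ _)
        (fun a ha => h a (List.mem_cons_of_mem _ ha)) Q
      show ψ.app Q ∩ (bigAnd d (ψ' :: L)).app Q = _
      rw [h ψ (List.mem_cons_self), hIH]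
      ext x
      constructor
      · rintro ⟨⟨hq, h1⟩, _⟩; exact ⟨hq, h1⟩
      · rintro ⟨hq, h1⟩; exact ⟨⟨hq, h1⟩, hq, h1⟩

open Classical in
lemma n1_canonCNF_app {m : ℕ} (hm : 0 < m) (hn : (0:ℕ) < 1) (A : Matrix (Fin m) (Fin 1) ℝ)
    (hrow : ∀ i, ∃ j, A i j = 1) (Q : Set (Fin 1 → ℝ)) :
    (canonCNF hn A).app Q = {x ∈ Q | x ⟨0, hn⟩ = 1} := by
  unfold canonCNF
  apply app_bigAnd_pos
  · apply List.ne_nil_of_length_pos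
    simp only [List.length_map, Finset.length_sort, Finset.card_univ, Fintype.card_fin]
    exact hm
  · intro ψ hψ
    obtain ⟨i, _, rfl⟩ := List.mem_map.1 hψ
    have hfilter : (Finset.univ.filter fun j => A i j = 1) = Finset.univ := by
      refine Finset.filter_true_of_mem fun j _ => ?_
      obtain ⟨j', hj'⟩ := hrow i
      rwa [Subsingleton.elim j j']
    rw [hfilter]
    have huniv : (Finset.univ : Finset (Fin 1)) = {⟨0, hn⟩} := by
      ext j
      simp [Subsingleton.elim j (⟨0, hn⟩ : Fin 1)]
    rw [huniv, Finset.sort_singleton]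
    rfl

open Classical in
lemma n1_iterApp {m : ℕ} (hm : 0 < m) (hn : (0:ℕ) < 1) (A : Matrix (Fin m) (Fin 1) ℝ)
    (hrow : ∀ i, ∃ j, A i j = 1) :
    ∀ k, 1 ≤ k → (canonCNF hn A).iterApp k (Set.Icc 0 1)
      = {x : Fin 1 → ℝ | x ∈ Set.Icc 0 1 ∧ x ⟨0, hn⟩ = 1} := by
  intro k
  induction k with
  | zero => intro h; omega
  | succ k ih =>
      intro _
      show (canonCNF hn A).app ((canonCNF hn A).iterApp k (Set.Icc 0 1)) = _
      rcases Nat.eq_zero_or_pos k with rfl | hk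
      · rw [n1_canonCNF_app hm hn A hrow]
        rfl
      · rw [ih hk, n1_canonCNF_app hm hn A hrow]
        ext x
        constructor
        · rintro ⟨⟨hI, h1⟩, _⟩; exact ⟨hI, h1⟩
        · rintro ⟨hI, h1⟩; exact ⟨⟨hI, h1⟩, h1⟩

lemma n1_isEF (hn : (0:ℕ) < 1) :
    IsEF {x : Fin 1 → ℝ | x ∈ Set.Icc 0 1 ∧ x ⟨0, hn⟩ = 1} 2 := by
  classical
  refine ⟨1, 1, fun r v => if r = 0 then 1 else -1, 0, fun r => if r = 0 then 1 else -1, ?_⟩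
  ext x
  simp only [Set.mem_setOf_eq, Set.mem_Icc]
  constructor
  · rintro ⟨⟨hx0, hx1⟩, hx⟩
    refine ⟨x, fun r => ?_, by simp [Matrix.one_mulVec]⟩
    have hmv : Matrix.mulVec (fun r v => if r = 0 then (1:ℝ) else -1) x r
        = (if r = 0 then (1:ℝ) else -1) * x 0 := by
      simp [Matrix.mulVec, dotProduct, Fin.sum_univ_one]
    rw [hmv]
    have hx00 : x 0 = 1 := hx
    by_cases h : r = 0 <;> simp [h, hx00]
  · rintro ⟨y, hy, hx⟩
    have h0 := hy 0
    have h1 := hy 1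
    have hmv : ∀ r : Fin 2, Matrix.mulVec (fun r v => if r = 0 then (1:ℝ) else -1) y r
        = (if r = 0 then (1:ℝ) else -1) * y 0 := by
      intro (r : Fin 2)
      simp [Matrix.mulVec, dotProduct, Fin.sum_univ_one]
    rw [hmv] at h0 h1
    have h10 : (1 : Fin 2) ≠ 0 := by decide
    rw [if_neg h10] at h1
    rw [if_pos rfl] at h0
    have hy0 : y 0 = 1 := by nlinarith
    have hxy : x = y := by
      rw [hx]
      simp [Matrix.one_mulVec]
    subst hxy
    have hxl : ∀ l : Fin 1, x l = 1 := fun l => by rw [Fin.eq_zero l]; exact hy0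
    refine ⟨⟨fun l => ?_, fun l => ?_⟩, hxl _⟩
    · rw [Pi.zero_apply, hxl l]; norm_num
    · rw [Pi.one_apply, hxl l]

end Stmt13Aux
theorem stmt13 {m n : ℕ} (hm : 0 < m) (hn : 0 < n) (A : Matrix (Fin m) (Fin n) ℝ)
    (hA01 : ∀ i j, A i j = 0 ∨ A i j = 1) (hrow : ∀ i, ∃ j, A i j = 1)
    (S : Set (Fin n → ℝ))
    (hS : S = {x | x ∈ CubeVerts n ∧ ∀ i, 1 ≤ ∑ j, A i j * x j})
    (k : ℕ) (hk : 1 ≤ k) :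
    (∀ (c : Fin n → ℝ) (δ : ℝ), (∀ i, 0 ≤ c i) → 0 ≤ δ → PitchLE c δ k →
        (∀ x ∈ S, δ ≤ ∑ i, c i * x i) →
        ∀ x ∈ (canonCNF hn A).iterApp k (Set.Icc (0 : Fin n → ℝ) 1),
          δ ≤ ∑ i, c i * x i) ∧
      (((canonCNF hn A).iterApp k (Set.Icc (0 : Fin n → ℝ) 1)).Nonempty →
        xc ((canonCNF hn A).iterApp k (Set.Icc (0 : Fin n → ℝ) 1)) ≤
          2 * n * (m * n) ^ k) := by
  constructor
  · intro c δ hc hδ hp hvS x hx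
    have hv' : ∀ x', (x' ∈ CubeVerts n ∧ ∀ i, 1 ≤ ∑ j, A i j * x' j) →
        δ ≤ ∑ i, c i * x' i := by
      intro x' hx'
      exact hvS x' (by rw [hS]; exact hx')
    exact Stmt13Aux.part1 hm hn A hA01 hrow k c δ hc hp hv' x hx
  · intro _
    rcases Nat.lt_or_ge n 2 with hn2 | hn2
    · -- n = 1
      have hn1 : n = 1 := by omega
      subst hn1
      have hiter := Stmt13Aux.n1_iterApp hm hn A hrow k hk
      have hEF2 : IsEF ((canonCNF hn A).iterApp k (Set.Icc (0 : Fin 1 → ℝ) 1)) 2 := by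
        rw [hiter]
        exact Stmt13Aux.n1_isEF hn
      have hle : 2 ≤ 2 * 1 * (m * 1) ^ k := by
        have h1 : 1 ≤ (m * 1) ^ k := Nat.one_le_pow _ _ (by omega)
        omega
      exact Nat.sInf_le (Stmt13Aux.isEF_mono hEF2 hle)
    · -- n ≥ 2
      have h := Stmt13Aux.gef_iter hn hn2 (canonCNF hn A)
        (Stmt13Aux.monoF_canonCNF hn A) k ∅
      rw [Stmt13Aux.face_empty, Set.inter_univ] at h
      have hEF : IsEF ((canonCNF hn A).iterApp k (Set.Icc (0 : Fin n → ℝ) 1))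
          ((canonCNF hn A).size ^ k * (2 * n)) := Stmt13Aux.gef_toIsEF h
      have hle : (canonCNF hn A).size ^ k * (2 * n) ≤ 2 * n * (m * n) ^ k := by
        have hs := Stmt13Aux.size_canonCNF hm hn A hrow
        calc (canonCNF hn A).size ^ k * (2 * n) ≤ (m * n) ^ k * (2 * n) :=
              Nat.mul_le_mul_right _ (Nat.pow_le_pow_left hs k)
          _ = 2 * n * (m * n) ^ k := by ring
      exact Nat.sInf_le (Stmt13Aux.isEF_mono hEF hle)
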